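/- Let A ∈ ℝ^{N×N} (N = 2M+1, M ≥ 1) be the symmetric pentadiagonal Toeplitz matrix with diagonal 2(1+k₂), first off-diagonals -1, second off-diagonals -k₂, with k₂ ∈ (-1/4, 0). Then (A^{-1})_{1,1} / (A^{-1})_{1,N} > 1, i.e., (A^{-1})_{1,1} > (A^{-1})_{1,N}. -/

import Mathlib

namespace Stmt9Aux

open Matrix

variable {n : ℕ}

/-- subdiagonal shift matrix -/
def Lm (n : ℕ) : Matrix (Fin (n+1)) (Fin (n+1)) ℝ :=
  Matrix.of fun i j => if (i:ℕ) = (j:ℕ)+1 then 1 else 0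

/-- corner matrix -/
def Ee (n : ℕ) (e : Fin (n+1)) : Matrix (Fin (n+1)) (Fin (n+1)) ℝ :=
  Matrix.of fun i j => if i = e ∧ j = e then 1 else 0

/-- corner matrix e₀e₀ᵀ -/
def E0 (n : ℕ) : Matrix (Fin (n+1)) (Fin (n+1)) ℝ := Ee n 0

/-- corner matrix eₙeₙᵀ -/
def En (n : ℕ) : Matrix (Fin (n+1)) (Fin (n+1)) ℝ := Ee n (Fin.last n)

lemma sum_delta (m : ℕ) (hm : m < n+1) (f : Fin (n+1) → ℝ) :
    (∑ k : Fin (n+1), if (k:ℕ) = m then f k else 0) = f ⟨m, hm⟩ := by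
  rw [Finset.sum_eq_single ⟨m, hm⟩]
  · simp
  · intro b _ hb
    rw [if_neg]
    intro h
    exact hb (Fin.ext h)
  · intro h; exact absurd (Finset.mem_univ _) h

lemma L_mul (X : Matrix (Fin (n+1)) (Fin (n+1)) ℝ) (i j : Fin (n+1)) :
    (Lm n * X) i j = if h : 1 ≤ (i:ℕ) then X ⟨(i:ℕ)-1, lt_of_le_of_lt (Nat.sub_le _ _) i.isLt⟩ j else 0 := by
  rw [Matrix.mul_apply]
  simp only [Lm, Matrix.of_apply, ite_mul, one_mul, zero_mul]
  split_ifs with h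
  · have : ∀ k : Fin (n+1), ((i:ℕ) = (k:ℕ)+1) = ((k:ℕ) = (i:ℕ)-1) := by
      intro k; ext; omega
    simp_rw [this]
    exact sum_delta _ _ _
  · apply Finset.sum_eq_zero
    intro k _
    rw [if_neg]; omega

lemma Lt_mul (X : Matrix (Fin (n+1)) (Fin (n+1)) ℝ) (i j : Fin (n+1)) :
    ((Lm n)ᵀ * X) i j = if h : (i:ℕ)+1 < n+1 then X ⟨(i:ℕ)+1, h⟩ j else 0 := by
  rw [Matrix.mul_apply]
  simp only [Lm, Matrix.transpose_apply, Matrix.of_apply, ite_mul, one_mul, zero_mul]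
  split_ifs with h
  · have : ∀ k : Fin (n+1), ((k:ℕ) = (i:ℕ)+1) = ((k:ℕ) = (i:ℕ)+1) := fun _ => rfl
    exact sum_delta _ h _
  · apply Finset.sum_eq_zero
    intro k _
    rw [if_neg]; omega

lemma L_mulVec (x : Fin (n+1) → ℝ) (i : Fin (n+1)) :
    (Lm n *ᵥ x) i = if h : 1 ≤ (i:ℕ) then x ⟨(i:ℕ)-1, lt_of_le_of_lt (Nat.sub_le _ _) i.isLt⟩ else 0 := by
  rw [Matrix.mulVec]
  show (∑ k, Lm n i k * x k) = _
  simp only [Lm, Matrix.of_apply, ite_mul, one_mul, zero_mul]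
  split_ifs with h
  · have : ∀ k : Fin (n+1), ((i:ℕ) = (k:ℕ)+1) = ((k:ℕ) = (i:ℕ)-1) := by
      intro k; ext; omega
    simp_rw [this]
    exact sum_delta _ _ _
  · apply Finset.sum_eq_zero
    intro k _
    rw [if_neg]; omega

lemma Lt_mulVec (x : Fin (n+1) → ℝ) (i : Fin (n+1)) :
    ((Lm n)ᵀ *ᵥ x) i = if h : (i:ℕ)+1 < n+1 then x ⟨(i:ℕ)+1, h⟩ else 0 := by
  rw [Matrix.mulVec]
  show (∑ k, (Lm n)ᵀ i k * x k) = _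
  simp only [Lm, Matrix.transpose_apply, Matrix.of_apply, ite_mul, one_mul, zero_mul]
  split_ifs with h
  · exact sum_delta _ h _
  · apply Finset.sum_eq_zero
    intro k _
    rw [if_neg]; omega

lemma hLtL : (Lm n)ᵀ * Lm n = 1 - En n := by
  ext i j
  rw [Lt_mul]
  simp only [Lm, En, Ee, Matrix.sub_apply, Matrix.one_apply, Matrix.of_apply]
  simp only [Fin.ext_iff, Fin.val_last, Fin.val_zero]
  have hi := i.isLt; have hj := j.isLt
  split_ifs <;> first | (exfalso; omega) | norm_num

lemma hLLt : Lm n * (Lm n)ᵀ = 1 - E0 n := by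
  ext i j
  rw [L_mul]
  simp only [Lm, E0, Ee, Matrix.sub_apply, Matrix.one_apply, Matrix.of_apply, Matrix.transpose_apply,
    Fin.ext_iff, Fin.val_zero]
  have hi := i.isLt; have hj := j.isLt
  split_ifs <;> first | (exfalso; omega) | norm_num

lemma hLL (i j : Fin (n+1)) :
    (Lm n * Lm n) i j = if (i:ℕ) = (j:ℕ)+2 then 1 else 0 := by
  rw [L_mul]
  simp only [Lm, Matrix.of_apply]
  have hi := i.isLt; have hj := j.isLt
  split_ifs <;> first | (exfalso; omega) | norm_num


/-- discrete Dirichlet Laplacian -/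
def Dm (n : ℕ) : Matrix (Fin (n+1)) (Fin (n+1)) ℝ :=
  (2:ℝ) • 1 - Lm n - (Lm n)ᵀ

def Cm (n : ℕ) (t : ℝ) : Matrix (Fin (n+1)) (Fin (n+1)) ℝ :=
  (1 - 4*t) • 1 + t • Dm n

lemma D_symm : (Dm n)ᵀ = Dm n := by
  simp [Dm, Matrix.transpose_sub, Matrix.transpose_smul, Matrix.transpose_one]
  abel

lemma C_symm (t : ℝ) : (Cm n t)ᵀ = Cm n t := by
  simp [Cm, Matrix.transpose_add, Matrix.transpose_smul, Matrix.transpose_one, D_symm]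

lemma hDD : Dm n * Dm n =
    (6:ℝ)•1 - (4:ℝ)•Lm n - (4:ℝ)•(Lm n)ᵀ + Lm n * Lm n + (Lm n)ᵀ*(Lm n)ᵀ - E0 n - En n := by
  have h1 := hLtL (n := n)
  have h2 := hLLt (n := n)
  simp only [Dm, sub_mul, mul_sub, Matrix.smul_mul, Matrix.mul_smul, one_mul, mul_one]
  rw [h1, h2]
  module

lemma hDC (t : ℝ) : Dm n * Cm n t = (1-4*t) • Dm n + t • (Dm n * Dm n) := by
  simp only [Cm, mul_add, Matrix.mul_smul, mul_one]

lemma D_mulVec (x : Fin (n+1) → ℝ) (i : Fin (n+1)) :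
    (Dm n *ᵥ x) i = 2 * x i - (Lm n *ᵥ x) i - ((Lm n)ᵀ *ᵥ x) i := by
  simp [Dm, Matrix.sub_mulVec, Matrix.smul_mulVec, Matrix.one_mulVec]

lemma E0_mulVec (x : Fin (n+1) → ℝ) :
    E0 n *ᵥ x = fun i => if i = 0 then x 0 else 0 := by
  funext i
  show (∑ j, E0 n i j * x j) = _
  simp only [E0, Ee, Matrix.of_apply, ite_and, ite_mul, one_mul, zero_mul]
  by_cases h : i = 0
  · simp only [h, eq_self_iff_true, if_true]
    rw [Finset.sum_ite_eq' Finset.univ (0 : Fin (n+1)) x]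
    simp
  · simp only [if_neg h]
    simp

lemma En_mulVec (x : Fin (n+1) → ℝ) :
    En n *ᵥ x = fun i => if i = Fin.last n then x (Fin.last n) else 0 := by
  funext i
  show (∑ j, En n i j * x j) = _
  simp only [En, Ee, Matrix.of_apply, ite_and, ite_mul, one_mul, zero_mul]
  by_cases h : i = Fin.last n
  · simp only [h, eq_self_iff_true, if_true]
    rw [Finset.sum_ite_eq' Finset.univ (Fin.last n) x]
    simp
  · simp only [if_neg h]
    simp

lemma dot_E0 (x : Fin (n+1) → ℝ) : x ⬝ᵥ (E0 n *ᵥ x) = x 0 * x 0 := by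
  rw [E0_mulVec]
  simp only [dotProduct]
  rw [Finset.sum_eq_single (0 : Fin (n+1))] <;> simp_all

lemma dot_En (x : Fin (n+1) → ℝ) : x ⬝ᵥ (En n *ᵥ x) = x (Fin.last n) * x (Fin.last n) := by
  rw [En_mulVec]
  simp only [dotProduct]
  rw [Finset.sum_eq_single (Fin.last n)] <;> simp_all

lemma dot_L_eq (x : Fin (n+1) → ℝ) : x ⬝ᵥ (Lm n *ᵥ x) = x ⬝ᵥ ((Lm n)ᵀ *ᵥ x) := by
  rw [Matrix.dotProduct_mulVec, ← Matrix.mulVec_transpose, dotProduct_comm]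

lemma dot_LtLt (x : Fin (n+1) → ℝ) :
    ((Lm n)ᵀ *ᵥ x) ⬝ᵥ ((Lm n)ᵀ *ᵥ x) = x ⬝ᵥ x - x 0 * x 0 := by
  rw [Matrix.dotProduct_mulVec, Matrix.vecMul_transpose, Matrix.mulVec_mulVec, hLLt,
    Matrix.sub_mulVec, Matrix.one_mulVec, sub_dotProduct, dotProduct_comm (E0 n *ᵥ x) x, dot_E0]

lemma qD (x : Fin (n+1) → ℝ) :
    x ⬝ᵥ (Dm n *ᵥ x) =
      (x - (Lm n)ᵀ *ᵥ x) ⬝ᵥ (x - (Lm n)ᵀ *ᵥ x) + x 0 * x 0 := by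
  have h1 := dot_L_eq (n := n) x
  have h2 := dot_LtLt (n := n) x
  have h3 : ((Lm n)ᵀ *ᵥ x) ⬝ᵥ x = x ⬝ᵥ ((Lm n)ᵀ *ᵥ x) := dotProduct_comm _ _
  simp only [Dm, Matrix.sub_mulVec, Matrix.smul_mulVec, Matrix.one_mulVec,
    dotProduct_sub, sub_dotProduct, dotProduct_smul, smul_eq_mul] at *
  rw [h1, h2, h3]
  ring

lemma eq_shift_zero (x : Fin (n+1) → ℝ) (h : x = (Lm n)ᵀ *ᵥ x) : x = 0 := by
  have key : ∀ k : ℕ, k ≤ n → x ⟨n - k, by omega⟩ = 0 := by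
    intro k
    induction k with
    | zero =>
      intro _
      have h0 := congrFun h ⟨n, by omega⟩
      rw [Lt_mulVec] at h0
      simpa using h0
    | succ k ih =>
      intro hk
      have h0 := congrFun h ⟨n - (k+1), by omega⟩
      rw [Lt_mulVec] at h0
      rw [h0]
      rw [dif_pos (by simp; omega)]
      have : (⟨(n-(k+1):ℕ)+1, by omega⟩ : Fin (n+1)) = ⟨n - k, by omega⟩ := by
        ext; simp; omega
      rw [this]
      exact ih (by omega)
  funext i
  have hi := i.isLt
  have := key (n - (i:ℕ)) (by omega)
  have hieq : (⟨n - (n - (i:ℕ)), by omega⟩ : Fin (n+1)) = i := by ext; simp; omega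
  rw [hieq] at this
  simpa using this

lemma qD_pos (x : Fin (n+1) → ℝ) (hx : x ≠ 0) : 0 < x ⬝ᵥ (Dm n *ᵥ x) := by
  rw [qD]
  set u := x - (Lm n)ᵀ *ᵥ x with hu
  have h1 : 0 ≤ u ⬝ᵥ u := Finset.sum_nonneg fun i _ => mul_self_nonneg _
  have h2 : 0 ≤ x 0 * x 0 := mul_self_nonneg _
  rcases lt_or_eq_of_le h1 with h | h
  · linarith
  · exfalso
    have hu0 : u = 0 := dotProduct_self_eq_zero.mp h.symm
    exact hx (eq_shift_zero x (sub_eq_zero.mp hu0))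


variable {e : Fin (n+1)} {t : ℝ}

lemma Ee_mul (X : Matrix (Fin (n+1)) (Fin (n+1)) ℝ) (i j : Fin (n+1)) :
    (Ee n e * X) i j = if i = e then X e j else 0 := by
  rw [Matrix.mul_apply]
  simp only [Ee, Matrix.of_apply, ite_and, ite_mul, one_mul, zero_mul]
  by_cases h : i = e
  · simp only [h, eq_self_iff_true, if_true]
    rw [Finset.sum_ite_eq' Finset.univ e (fun k => X k j)]
    simp
  · simp only [if_neg h]
    simp

lemma mul_Ee (X : Matrix (Fin (n+1)) (Fin (n+1)) ℝ) (i j : Fin (n+1)) :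
    (X * Ee n e) i j = if j = e then X i e else 0 := by
  rw [Matrix.mul_apply]
  simp only [Ee, Matrix.of_apply, ite_and, mul_ite, mul_one, mul_zero]
  by_cases h : j = e
  · simp only [h, eq_self_iff_true, if_true]
    rw [Finset.sum_ite_eq' Finset.univ e (fun k => X i k)]
    simp
  · simp only [if_neg h]
    simp

lemma mul_Ee_mul (X Y : Matrix (Fin (n+1)) (Fin (n+1)) ℝ) (i j : Fin (n+1)) :
    (X * Ee n e * Y) i j = X i e * Y e j := by
  rw [Matrix.mul_apply]
  have : ∀ k, (X * Ee n e) i k * Y k j = if k = e then X i e * Y k j else 0 := by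
    intro k
    rw [mul_Ee]
    split_ifs <;> simp
  simp_rw [this]
  rw [Finset.sum_ite_eq' Finset.univ e (fun k => X i e * Y k j)]
  simp

lemma Ee_mul_Ee (X : Matrix (Fin (n+1)) (Fin (n+1)) ℝ) :
    Ee n e * X * Ee n e = (X e e) • Ee n e := by
  ext i j
  rw [mul_Ee, Ee_mul]
  simp only [Matrix.smul_apply, Ee, Matrix.of_apply, smul_eq_mul]
  split_ifs <;> simp_all

/-- Sherman–Morrison right-inverse identity for a corner update. -/
lemma SM_inv (B W : Matrix (Fin (n+1)) (Fin (n+1)) ℝ) (hBW : B * W = 1)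
    (hden : 1 + t * W e e ≠ 0) :
    (B + t • Ee n e) * (W - (t/(1 + t * W e e)) • (W * Ee n e * W)) = 1 := by
  set c : ℝ := t/(1 + t * W e e) with hc
  have h1 : B * (W * Ee n e * W) = Ee n e * W := by
    rw [← Matrix.mul_assoc, ← Matrix.mul_assoc, hBW, Matrix.one_mul]
  have h2 : Ee n e * (W * Ee n e * W) = (W e e) • (Ee n e * W) := by
    rw [← Matrix.mul_assoc, ← Matrix.mul_assoc (Ee n e) W (Ee n e), Ee_mul_Ee,
      Matrix.smul_mul]
  rw [Matrix.add_mul, Matrix.mul_sub, Matrix.mul_smul, h1, hBW, Matrix.smul_mul,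
    Matrix.mul_sub, Matrix.mul_smul, h2]
  have hcoef : t * (c * W e e) = t - c := by
    rw [hc]; field_simp; ring
  rw [smul_sub, smul_smul, smul_smul, show t * c * W e e = t - c by rw [mul_assoc]; exact hcoef]
  module

/-- helper: positive definiteness from transpose-symmetry and the real quadratic form -/
lemma posdef_of (M : Matrix (Fin (n+1)) (Fin (n+1)) ℝ) (hsym : Mᵀ = M)
    (h : ∀ x : Fin (n+1) → ℝ, x ≠ 0 → 0 < x ⬝ᵥ (M *ᵥ x)) : M.PosDef := by
  rw [Matrix.posDef_iff_dotProduct_mulVec]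
  constructor
  · show Mᴴ = M
    have h2 : Mᴴ = Mᵀ := by
      ext i j
      simp [Matrix.conjTranspose_apply]
    rw [h2, hsym]
  · intro x hx
    simpa using h x hx

lemma D_posdef : (Dm n).PosDef := posdef_of _ D_symm qD_pos

lemma dot_self_pos {x : Fin (n+1) → ℝ} (hx : x ≠ 0) : 0 < x ⬝ᵥ x := by
  rcases lt_or_eq_of_le (Finset.sum_nonneg fun i _ => mul_self_nonneg (x i) :
      (0:ℝ) ≤ x ⬝ᵥ x) with h | h
  · exact h
  · exact absurd (dotProduct_self_eq_zero.mp h.symm) hx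

lemma C_posdef (ht : 0 < t) (ht4 : 4*t < 1) : (Cm n t).PosDef := by
  apply posdef_of _ (C_symm t)
  intro x hx
  have : x ⬝ᵥ (Cm n t *ᵥ x) = (1-4*t) * (x ⬝ᵥ x) + t * (x ⬝ᵥ (Dm n *ᵥ x)) := by
    simp [Cm, Matrix.add_mulVec, Matrix.smul_mulVec, Matrix.one_mulVec,
      dotProduct_add, dotProduct_smul, smul_eq_mul]
  rw [this]
  have h1 := dot_self_pos hx
  have h2 := qD_pos x hx
  nlinarith

lemma qP (x : Fin (n+1) → ℝ) :
    x ⬝ᵥ ((Dm n * Cm n t) *ᵥ x) =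
      (1-4*t) * (x ⬝ᵥ (Dm n *ᵥ x)) + t * ((Dm n *ᵥ x) ⬝ᵥ (Dm n *ᵥ x)) := by
  have hsq : x ⬝ᵥ ((Dm n * Dm n) *ᵥ x) = (Dm n *ᵥ x) ⬝ᵥ (Dm n *ᵥ x) := by
    rw [← Matrix.mulVec_mulVec, Matrix.dotProduct_mulVec, ← Matrix.mulVec_transpose, D_symm]
  rw [hDC]
  simp [Matrix.add_mulVec, Matrix.smul_mulVec, dotProduct_add, dotProduct_smul,
    smul_eq_mul, hsq]

lemma P_symm : (Dm n * Cm n t)ᵀ = Dm n * Cm n t := by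
  rw [Matrix.transpose_mul, D_symm, C_symm, Cm]
  simp only [Matrix.add_mul, Matrix.mul_add, Matrix.smul_mul, Matrix.mul_smul,
    Matrix.one_mul, Matrix.mul_one]

lemma P_posdef (ht : 0 < t) (ht4 : 4*t < 1) : (Dm n * Cm n t).PosDef := by
  apply posdef_of _ P_symm
  intro x hx
  rw [qP]
  have h1 := qD_pos x hx
  have h2 : 0 ≤ (Dm n *ᵥ x) ⬝ᵥ (Dm n *ᵥ x) := Finset.sum_nonneg fun i _ => mul_self_nonneg _
  nlinarith


lemma Ee_symm : (Ee n e)ᵀ = Ee n e := by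
  ext i j
  simp only [Matrix.transpose_apply, Ee, Matrix.of_apply]
  split_ifs <;> simp_all <;> tauto

lemma posdef_diag_pos {M : Matrix (Fin (n+1)) (Fin (n+1)) ℝ} (hM : M.PosDef) (i : Fin (n+1)) :
    0 < M i i := by
  have := hM.dotProduct_mulVec_pos (x := Pi.single i 1) (by
    intro h
    have := congrFun h i
    simp at this)
  simpa [Matrix.mulVec_single, single_dotProduct] using this

lemma mulVec_col (X Y : Matrix (Fin (n+1)) (Fin (n+1)) ℝ) (j : Fin (n+1)) :
    X *ᵥ (fun k => Y k j) = fun i => (X * Y) i j := by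
  funext i
  rw [Matrix.mul_apply, Matrix.mulVec]
  rfl

lemma Cinv_nonneg (ht : 0 < t) (ht4 : 4*t < 1) (i j : Fin (n+1)) :
    0 ≤ (Cm n t)⁻¹ i j := by
  have hCpd := C_posdef (n := n) ht ht4
  have hCX : Cm n t * (Cm n t)⁻¹ = 1 :=
    Matrix.mul_nonsing_inv _ hCpd.det_pos.ne'.isUnit
  set x : Fin (n+1) → ℝ := fun k => (Cm n t)⁻¹ k j with hx
  have hcol : Cm n t *ᵥ x = fun i => (1 : Matrix (Fin (n+1)) (Fin (n+1)) ℝ) i j := by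
    rw [hx, mulVec_col, hCX]
  by_contra hneg
  push_neg at hneg
  obtain ⟨m, _, hm⟩ := Finset.exists_min_image Finset.univ x ⟨i, Finset.mem_univ i⟩
  have hmneg : x m < 0 := lt_of_le_of_lt (hm i (Finset.mem_univ i)) hneg
  have hLb : x m ≤ (Lm n *ᵥ x) m := by
    rw [L_mulVec]
    split_ifs
    · exact hm _ (Finset.mem_univ _)
    · exact le_of_lt hmneg
  have hLtb : x m ≤ ((Lm n)ᵀ *ᵥ x) m := by
    rw [Lt_mulVec]
    split_ifs
    · exact hm _ (Finset.mem_univ _)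
    · exact le_of_lt hmneg
  have hrow : (Cm n t *ᵥ x) m = (1-4*t) * x m + t * ((Dm n *ᵥ x) m) := by
    simp [Cm, Matrix.add_mulVec, Matrix.smul_mulVec, Matrix.one_mulVec]
  have hDrow := D_mulVec (n := n) x m
  have h1 : (0:ℝ) ≤ (1 : Matrix (Fin (n+1)) (Fin (n+1)) ℝ) m j := by
    rw [Matrix.one_apply]
    split_ifs <;> norm_num
  have h2 : (Cm n t *ᵥ x) m = (1 : Matrix (Fin (n+1)) (Fin (n+1)) ℝ) m j := congrFun hcol m
  nlinarith

lemma Dinv_nonneg (j : Fin (n+1)) : ∀ i, 0 ≤ (Dm n)⁻¹ i j := by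
  have hDpd := D_posdef (n := n)
  have hDX : Dm n * (Dm n)⁻¹ = 1 :=
    Matrix.mul_nonsing_inv _ hDpd.det_pos.ne'.isUnit
  set x : Fin (n+1) → ℝ := fun k => (Dm n)⁻¹ k j with hx
  have hcol : Dm n *ᵥ x = fun i => (1 : Matrix (Fin (n+1)) (Fin (n+1)) ℝ) i j := by
    rw [hx, mulVec_col, hDX]
  intro i
  by_contra hneg
  push_neg at hneg
  obtain ⟨m0, _, hm0⟩ := Finset.exists_min_image Finset.univ x ⟨i, Finset.mem_univ i⟩
  have hμneg : x m0 < 0 := lt_of_le_of_lt (hm0 i (Finset.mem_univ i)) hneg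
  -- least index achieving the minimum
  set s : Finset (Fin (n+1)) := Finset.univ.filter (fun k => x k = x m0) with hs
  have hsne : s.Nonempty := ⟨m0, by simp [hs]⟩
  set m := s.min' hsne with hmdef
  have hmval : x m = x m0 := by
    have := s.min'_mem hsne
    simp [hs] at this
    exact this
  have hmin : ∀ k, x m ≤ x k := by
    intro k; rw [hmval]; exact hm0 k (Finset.mem_univ k)
  have hleast : ∀ k : Fin (n+1), x k = x m0 → m ≤ k := by
    intro k hk
    exact s.min'_le k (by simp [hs, hk])
  -- strict bound for the left neighbour
  have hLb : x m < (Lm n *ᵥ x) m := by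
    rw [L_mulVec]
    split_ifs with h
    · rcases lt_or_eq_of_le (hmin ⟨(m:ℕ)-1, lt_of_le_of_lt (Nat.sub_le _ _) m.isLt⟩) with h2 | h2
      · exact h2
      · exfalso
        have := hleast _ (by rw [← h2, hmval])
        rw [Fin.le_def] at this
        simp at this
        omega
    · rw [hmval]; exact hμneg
  have hLtb : x m ≤ ((Lm n)ᵀ *ᵥ x) m := by
    rw [Lt_mulVec]
    split_ifs
    · exact hmin _
    · rw [hmval]; exact le_of_lt hμneg
  have hDrow := D_mulVec (n := n) x m
  have h1 : (0:ℝ) ≤ (1 : Matrix (Fin (n+1)) (Fin (n+1)) ℝ) m j := by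
    rw [Matrix.one_apply]
    split_ifs <;> norm_num
  have h2 : (Dm n *ᵥ x) m = (1 : Matrix (Fin (n+1)) (Fin (n+1)) ℝ) m j := congrFun hcol m
  have hxm : x m < 0 := by rw [hmval]; exact hμneg
  nlinarith

lemma Dinv_corner_pos (hn : 1 ≤ n) : 0 < (Dm n)⁻¹ 0 (Fin.last n) := by
  have hDpd := D_posdef (n := n)
  have hDX : Dm n * (Dm n)⁻¹ = 1 :=
    Matrix.mul_nonsing_inv _ hDpd.det_pos.ne'.isUnit
  set x : Fin (n+1) → ℝ := fun k => (Dm n)⁻¹ k (Fin.last n) with hx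
  have hcol : Dm n *ᵥ x = fun i => (1 : Matrix (Fin (n+1)) (Fin (n+1)) ℝ) i (Fin.last n) := by
    rw [hx, mulVec_col, hDX]
  rcases lt_or_eq_of_le (Dinv_nonneg (n := n) (Fin.last n) 0) with h | h
  · exact h
  exfalso
  -- ℕ-indexed accessor
  set y : ℕ → ℝ := fun k => if hk : k < n+1 then x ⟨k, hk⟩ else 0 with hy
  have hyval : ∀ (k : ℕ) (hk : k < n+1), y k = x ⟨k, hk⟩ := fun k hk => dif_pos hk
  have hrow : ∀ i : Fin (n+1), 2 * x i - (Lm n *ᵥ x) i - ((Lm n)ᵀ *ᵥ x) i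
      = (1 : Matrix (Fin (n+1)) (Fin (n+1)) ℝ) i (Fin.last n) := by
    intro i
    rw [← D_mulVec]
    exact congrFun hcol i
  have hone_ne : ∀ (m : ℕ) (hm : m < n+1), m ≠ n →
      (1 : Matrix (Fin (n+1)) (Fin (n+1)) ℝ) ⟨m, hm⟩ (Fin.last n) = 0 := by
    intro m hm hmn
    apply Matrix.one_apply_ne
    intro hcontra
    rw [Fin.ext_iff] at hcontra
    simp [Fin.last] at hcontra
    omega
  -- row m as an equation in y
  have hrowy : ∀ m : ℕ, (hm : m < n+1) →
      2 * y m - (if 1 ≤ m then y (m-1) else 0) - (if m+1 < n+1 then y (m+1) else 0)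
        = (1 : Matrix (Fin (n+1)) (Fin (n+1)) ℝ) ⟨m, hm⟩ (Fin.last n) := by
    intro m hm
    have h0 := hrow ⟨m, hm⟩
    rw [L_mulVec, Lt_mulVec] at h0
    simp only [show ((⟨m, hm⟩ : Fin (n+1)) : ℕ) = m from rfl] at h0
    rw [← h0]
    congr 1
    · congr 1
      · rw [hyval m hm]
      · split_ifs with h1
        · exact hyval (m-1) (by omega)
        · rfl
    · split_ifs with h1
      · exact hyval (m+1) (by omega)
      · rfl
  have hy0 : y 0 = 0 := by
    rw [hyval 0 (by omega)]
    exact h.symm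
  have key : ∀ k, k ≤ n → y k = 0 := by
    intro k
    induction k using Nat.strong_induction_on with
    | _ k ih =>
      rcases k with (_ | (_ | k))
      · intro _; exact hy0
      · intro hk
        have h0 := hrowy 0 (by omega)
        rw [if_neg (by omega), if_pos (by omega), hone_ne 0 (by omega) (by omega), hy0] at h0
        linarith
      · intro hk
        have h0 := hrowy (k+1) (by omega)
        rw [if_pos (by omega), if_pos (by omega), hone_ne (k+1) (by omega) (by omega)] at h0
        have e1 : k+1-1 = k := by omega
        rw [e1, ih k (by omega) (by omega), ih (k+1) (by omega) (by omega)] at h0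
        linarith
  have hlast := hrowy n (by omega)
  rw [if_pos (by omega), if_neg (by omega)] at hlast
  have hone : (1 : Matrix (Fin (n+1)) (Fin (n+1)) ℝ) ⟨n, by omega⟩ (Fin.last n) = 1 := by
    have : (⟨n, by omega⟩ : Fin (n+1)) = Fin.last n := by
      rw [Fin.ext_iff]; simp [Fin.last]
    rw [this]
    exact Matrix.one_apply_eq _
  rw [hone, key n (by omega), key (n-1) (by omega)] at hlast
  norm_num at hlast

lemma sm_scalar (t a b : ℝ) (h : 1 + t*b ≠ 0) : a - t/(1+t*b)*(b*a) = a/(1+t*b) := by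
  field_simp
  ring

lemma sm_scalar' (t a b : ℝ) (h : 1 + t*b ≠ 0) : a - t/(1+t*b)*(a*b) = a/(1+t*b) := by
  field_simp
  ring

lemma E0_def : E0 n = Ee n 0 := rfl
lemma En_def : En n = Ee n (Fin.last n) := rfl

lemma E0_symm : (E0 n)ᵀ = E0 n := Ee_symm
lemma En_symm : (En n)ᵀ = En n := Ee_symm

end Stmt9Aux

open Matrix Stmt9Aux in
/-- For the symmetric pentadiagonal Toeplitz matrix of size `N = 2M+1` with
diagonal `2(1+k₂)`, first off-diagonals `-1`, second off-diagonals `-k₂`,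
with `k₂ ∈ (-1/4, 0)`: `(A⁻¹)₁,₁ / (A⁻¹)₁,N > 1`, i.e. `(A⁻¹)₁,₁ > (A⁻¹)₁,N`. -/
theorem stmt_9 (M : ℕ) (hM : 1 ≤ M) (k₂ : ℝ) (hk₂l : -1/4 < k₂) (hk₂u : k₂ < 0)
    (A : Matrix (Fin (2 * M + 1)) (Fin (2 * M + 1)) ℝ)
    (hA : ∀ i j : Fin (2 * M + 1), A i j =
      if (i : ℤ) = (j : ℤ) then 2 * (1 + k₂)
      else if |(i : ℤ) - (j : ℤ)| = 1 then -1
      else if |(i : ℤ) - (j : ℤ)| = 2 then -k₂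
      else 0) :
    1 < A⁻¹ 0 0 / A⁻¹ 0 (Fin.last (2 * M)) ∧
      A⁻¹ 0 (Fin.last (2 * M)) < A⁻¹ 0 0 := by
  have ht : 0 < -k₂ := by linarith
  have ht4 : 4*(-k₂) < 1 := by linarith
  set t : ℝ := -k₂ with htdef
  -- step 1 : entrywise identification of A
  have hA'' : A = (2-2*t) • (1 : Matrix (Fin (2*M+1)) (Fin (2*M+1)) ℝ)
      - Lm (2*M) - (Lm (2*M))ᵀ
      + t • (Lm (2*M) * Lm (2*M))
      + t • ((Lm (2*M))ᵀ * (Lm (2*M))ᵀ) := by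
    ext i j
    rw [hA i j]
    have hLLij := hLL (n := 2*M) i j
    have hLtLtij : ((Lm (2*M))ᵀ * (Lm (2*M))ᵀ) i j
        = if (j:ℕ) = (i:ℕ)+2 then 1 else 0 := by
      rw [← Matrix.transpose_mul, Matrix.transpose_apply, hLL]
    have habs1 : ∀ a : ℤ, (|a| = 1) = (a = 1 ∨ a = -1) :=
      fun a => propext (abs_eq (by norm_num))
    have habs2 : ∀ a : ℤ, (|a| = 2) = (a = 2 ∨ a = -2) :=
      fun a => propext (abs_eq (by norm_num))
    have hL : Lm (2*M) i j = if (i:ℕ) = (j:ℕ)+1 then 1 else 0 := rfl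
    have hLt : (Lm (2*M))ᵀ i j = if (j:ℕ) = (i:ℕ)+1 then 1 else 0 := rfl
    simp only [Matrix.add_apply, Matrix.sub_apply, Matrix.smul_apply, Matrix.one_apply,
      smul_eq_mul, hLLij, hLtLtij, hL, hLt, habs1, habs2]
    have hi := i.isLt; have hj := j.isLt
    split_ifs <;> first | (exfalso; omega) | ((try rw [htdef]); push_cast; ring)
  -- step 2 : structural decomposition
  have hA2 : A = Dm (2*M) * Cm (2*M) t + t • E0 (2*M) + t • En (2*M) := by
    rw [hA'', hDC, hDD]
    simp only [Dm]
    module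
  set P := Dm (2*M) * Cm (2*M) t with hPdef
  have hPpd : P.PosDef := P_posdef ht ht4
  -- positive definiteness of A
  have hApd : A.PosDef := by
    apply posdef_of
    · rw [hA2, Matrix.transpose_add, Matrix.transpose_add, Matrix.transpose_smul,
        Matrix.transpose_smul, P_symm, E0_symm, En_symm]
    · intro x hx
      have hform : x ⬝ᵥ (A *ᵥ x) = x ⬝ᵥ (P *ᵥ x)
          + t * (x 0 * x 0) + t * (x (Fin.last (2*M)) * x (Fin.last (2*M))) := by
        rw [hA2]
        simp only [Matrix.add_mulVec, Matrix.smul_mulVec, dotProduct_add,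
          dotProduct_smul, smul_eq_mul, dot_E0, dot_En]
      have hP : 0 < x ⬝ᵥ (P *ᵥ x) := by simpa using hPpd.dotProduct_mulVec_pos hx
      have e1 : 0 ≤ t * (x 0 * x 0) := mul_nonneg ht.le (mul_self_nonneg _)
      have e2 : 0 ≤ t * (x (Fin.last (2*M)) * x (Fin.last (2*M))) :=
        mul_nonneg ht.le (mul_self_nonneg _)
      rw [hform]
      linarith
  -- part 1 : positivity of the corner entry of A⁻¹
  have hPW : P * P⁻¹ = 1 := Matrix.mul_nonsing_inv _ hPpd.det_pos.ne'.isUnit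
  have hW00 : 0 < P⁻¹ 0 0 := posdef_diag_pos hPpd.inv 0
  have hW0n : 0 < P⁻¹ 0 (Fin.last (2*M)) := by
    rw [hPdef, Matrix.mul_inv_rev, Matrix.mul_apply]
    apply Finset.sum_pos'
    · intro k _
      exact mul_nonneg (Cinv_nonneg ht ht4 0 k) (Dinv_nonneg (Fin.last (2*M)) k)
    · exact ⟨0, Finset.mem_univ _,
        mul_pos (posdef_diag_pos (C_posdef ht ht4).inv 0) (Dinv_corner_pos (by omega))⟩
  have hden1 : (0:ℝ) < 1 + t * P⁻¹ 0 0 := by nlinarith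
  have hSM1 : (P + t • Ee (2*M) 0) *
      (P⁻¹ - (t/(1 + t * P⁻¹ 0 0)) • (P⁻¹ * Ee (2*M) 0 * P⁻¹)) = 1 :=
    SM_inv P P⁻¹ hPW hden1.ne'
  set Q := P⁻¹ - (t/(1 + t * P⁻¹ 0 0)) • (P⁻¹ * Ee (2*M) 0 * P⁻¹) with hQdef
  have hA1pd : (P + t • Ee (2*M) 0).PosDef := by
    apply posdef_of
    · rw [Matrix.transpose_add, Matrix.transpose_smul, P_symm, Ee_symm]
    · intro x hx
      have h1 : 0 < x ⬝ᵥ (P *ᵥ x) := by simpa using hPpd.dotProduct_mulVec_pos hx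
      have hE : x ⬝ᵥ (Ee (2*M) 0 *ᵥ x) = x 0 * x 0 := dot_E0 x
      simp only [Matrix.add_mulVec, Matrix.smul_mulVec, dotProduct_add,
        dotProduct_smul, smul_eq_mul, hE]
      nlinarith [mul_self_nonneg (x 0)]
  have hQ : (P + t • Ee (2*M) 0)⁻¹ = Q := Matrix.inv_eq_right_inv hSM1
  have hQpd : Q.PosDef := hQ ▸ hA1pd.inv
  have hQnn : 0 < Q (Fin.last (2*M)) (Fin.last (2*M)) := posdef_diag_pos hQpd _
  have hQ0n : 0 < Q 0 (Fin.last (2*M)) := by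
    have hentry : Q 0 (Fin.last (2*M)) = P⁻¹ 0 (Fin.last (2*M))
        - (t/(1 + t * P⁻¹ 0 0)) * (P⁻¹ 0 0 * P⁻¹ 0 (Fin.last (2*M))) := by
      rw [hQdef]
      simp only [Matrix.sub_apply, Matrix.smul_apply, smul_eq_mul]
      rw [mul_Ee_mul]
    have hval : Q 0 (Fin.last (2*M)) =
        P⁻¹ 0 (Fin.last (2*M)) / (1 + t * P⁻¹ 0 0) := by
      rw [hentry]
      exact sm_scalar t _ _ hden1.ne'
    rw [hval]
    exact div_pos hW0n hden1
  have hden2 : (0:ℝ) < 1 + t * Q (Fin.last (2*M)) (Fin.last (2*M)) := by nlinarith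
  have hA2' : A = (P + t • Ee (2*M) 0) + t • Ee (2*M) (Fin.last (2*M)) := by
    rw [hA2, E0_def, En_def]
  have hSM2 : A * (Q - (t/(1 + t * Q (Fin.last (2*M)) (Fin.last (2*M)))) •
      (Q * Ee (2*M) (Fin.last (2*M)) * Q)) = 1 := by
    rw [hA2']
    exact SM_inv _ Q hSM1 hden2.ne'
  have hAinv : A⁻¹ = Q - (t/(1 + t * Q (Fin.last (2*M)) (Fin.last (2*M)))) •
      (Q * Ee (2*M) (Fin.last (2*M)) * Q) := Matrix.inv_eq_right_inv hSM2
  have hpos : 0 < A⁻¹ 0 (Fin.last (2*M)) := by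
    have hentry : A⁻¹ 0 (Fin.last (2*M)) = Q 0 (Fin.last (2*M))
        - (t/(1 + t * Q (Fin.last (2*M)) (Fin.last (2*M)))) *
          (Q 0 (Fin.last (2*M)) * Q (Fin.last (2*M)) (Fin.last (2*M))) := by
      rw [hAinv]
      simp only [Matrix.sub_apply, Matrix.smul_apply, smul_eq_mul]
      rw [mul_Ee_mul]
    have hval : A⁻¹ 0 (Fin.last (2*M)) = Q 0 (Fin.last (2*M)) /
        (1 + t * Q (Fin.last (2*M)) (Fin.last (2*M))) := by
      rw [hentry]
      exact sm_scalar' t _ _ hden2.ne'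
    rw [hval]
    exact div_pos hQ0n hden2
  -- part 2 : persymmetry and positive definiteness of A⁻¹
  have hAAinv : A * A⁻¹ = 1 := Matrix.mul_nonsing_inv _ hApd.det_pos.ne'.isUnit
  have hrevA : A.submatrix (⇑(Fin.revPerm : Equiv.Perm (Fin (2*M+1))))
      (⇑(Fin.revPerm : Equiv.Perm (Fin (2*M+1)))) = A := by
    ext i j
    simp only [Matrix.submatrix_apply, Fin.revPerm_apply]
    rw [hA, hA]
    have habs1 : ∀ a : ℤ, (|a| = 1) = (a = 1 ∨ a = -1) :=
      fun a => propext (abs_eq (by norm_num))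
    have habs2 : ∀ a : ℤ, (|a| = 2) = (a = 2 ∨ a = -2) :=
      fun a => propext (abs_eq (by norm_num))
    simp only [habs1, habs2]
    have hi := i.isLt; have hj := j.isLt
    have hri : ((Fin.rev i : Fin (2*M+1)) : ℕ) = 2*M - (i:ℕ) := by
      rw [Fin.val_rev]; omega
    have hrj : ((Fin.rev j : Fin (2*M+1)) : ℕ) = 2*M - (j:ℕ) := by
      rw [Fin.val_rev]; omega
    split_ifs <;> first | rfl | (exfalso; omega)
  have hArevinv : A⁻¹ = A⁻¹.submatrix (⇑(Fin.revPerm : Equiv.Perm (Fin (2*M+1))))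
      (⇑(Fin.revPerm : Equiv.Perm (Fin (2*M+1)))) := by
    apply Matrix.inv_eq_right_inv
    have hsub := Matrix.submatrix_mul_equiv A A⁻¹
      (⇑(Fin.revPerm : Equiv.Perm (Fin (2*M+1)))) (Fin.revPerm : Equiv.Perm (Fin (2*M+1)))
      (⇑(Fin.revPerm : Equiv.Perm (Fin (2*M+1))))
    rw [hrevA, hAAinv, Matrix.submatrix_one_equiv] at hsub
    exact hsub
  have hrev0 : Fin.rev (0 : Fin (2*M+1)) = Fin.last (2*M) := by
    rw [Fin.ext_iff, Fin.val_rev, Fin.val_last]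
    simp
  have hrevlast : Fin.rev (Fin.last (2*M)) = (0 : Fin (2*M+1)) := by
    rw [Fin.ext_iff, Fin.val_rev, Fin.val_last]
    simp
  have h00 : A⁻¹ 0 0 = A⁻¹ (Fin.last (2*M)) (Fin.last (2*M)) := by
    conv_lhs => rw [hArevinv]
    simp only [Matrix.submatrix_apply, Fin.revPerm_apply]
    rw [hrev0]
  have h0n : A⁻¹ (Fin.last (2*M)) 0 = A⁻¹ 0 (Fin.last (2*M)) := by
    have hH := hApd.inv.1
    have := congrFun (congrFun (congrArg (fun X => X) hH) 0) (Fin.last (2*M))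
    simpa [Matrix.conjTranspose_apply] using this
  have hne0last : (0 : Fin (2*M+1)) ≠ Fin.last (2*M) := by
    rw [Fin.ne_iff_vne, Fin.val_zero, Fin.val_last]
    omega
  set v : Fin (2*M+1) → ℝ :=
    (Pi.single (0 : Fin (2*M+1)) (1:ℝ)) - (Pi.single (Fin.last (2*M)) (1:ℝ)) with hvdef
  have hvne : v ≠ 0 := by
    intro hcontra
    have h1 := congrFun hcontra 0
    rw [hvdef] at h1
    rw [Pi.sub_apply, Pi.single_eq_same, Pi.single_eq_of_ne hne0last, Pi.zero_apply] at h1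
    norm_num at h1
  have hq2 : 0 < v ⬝ᵥ (A⁻¹ *ᵥ v) := by
    simpa using hApd.inv.dotProduct_mulVec_pos hvne
  have hexp : v ⬝ᵥ (A⁻¹ *ᵥ v)
      = A⁻¹ 0 0 - A⁻¹ 0 (Fin.last (2*M)) - A⁻¹ (Fin.last (2*M)) 0
        + A⁻¹ (Fin.last (2*M)) (Fin.last (2*M)) := by
    rw [hvdef, Matrix.mulVec_sub, Matrix.mulVec_single_one, Matrix.mulVec_single_one]
    simp only [sub_dotProduct, dotProduct_sub, single_dotProduct, Matrix.col_apply]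
    ring
  rw [hexp] at hq2
  rw [h0n, ← h00] at hq2
  have hlt : A⁻¹ 0 (Fin.last (2*M)) < A⁻¹ 0 0 := by linarith
  exact ⟨(one_lt_div hpos).mpr hlt, hlt⟩
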